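/- If f is holomorphic on an annulus R < |z| < ∞ and has, at infinity, a pole of order n ≥ 2 (i.e., f(z) ~ c z^n as z → ∞ with c ≠ 0), then the equation ż = f(z) has at least n−1 trajectories z(t) with z(t) → ∞ in finite increasing time. -/

import Mathlib

open Filter Set Metric Complex

/-- Core construction: given `q` analytic at `0` with `q 0 ≠ 0` and `m ≥ 1`, produce `m`
pairwise-disjoint curves `u j : ℝ → ℂ` on `(α, 0)` with `u j t ≠ 0`, `‖u j t‖ < δ`,
`u j t → 0` as `t → 0⁻`, and a derivative `D` satisfying
`D * ((u j t) ^ (m - 1) * q (u j t)) = -1`. -/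
lemma stmt5_core (q : ℂ → ℂ) (m : ℕ) (hm : 1 ≤ m) (hq0 : q 0 ≠ 0)
    (hqan : AnalyticAt ℂ q 0) (δ : ℝ) (hδ : 0 < δ) :
    ∃ (u : Fin m → ℝ → ℂ) (α : ℝ), α < 0 ∧
      (∀ j : Fin m, ∀ t ∈ Set.Ioo α (0:ℝ), u j t ≠ 0 ∧ ‖u j t‖ < δ ∧
        ∃ D : ℂ, HasDerivAt (u j) D t ∧ D * ((u j t) ^ (m - 1) * q (u j t)) = -1) ∧
      (∀ j : Fin m, Filter.Tendsto (u j) (nhdsWithin 0 (Set.Iio (0:ℝ))) (nhds 0)) ∧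
      (∀ j k : Fin m, j ≠ k → ∀ s ∈ Set.Ioo α (0:ℝ), ∀ t ∈ Set.Ioo α (0:ℝ),
        u j s ≠ u k t) := by
  obtain ⟨p, rp, hp⟩ := hqan
  obtain ⟨rn, hrn0, hrnrp⟩ := ENNReal.lt_iff_exists_nnreal_btwn.mp hp.r_pos
  set r1 : ℝ := min (min (rn : ℝ) δ) 1 with hr1def
  have hr1pos : 0 < r1 := by
    refine lt_min (lt_min ?_ hδ) one_pos
    exact_mod_cast hrn0
  have hr1rn : r1 ≤ (rn : ℝ) := (min_le_left _ _).trans (min_le_left _ _)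
  have hr1δ : r1 ≤ δ := (min_le_left _ _).trans (min_le_right _ _)
  have hr1one : r1 ≤ 1 := min_le_right _ _
  set a : ℕ → ℂ := fun i => p.coeff i with hadef
  set b : ℕ → ℂ := fun i => a i / ((i + m : ℕ) : ℂ) with hbdef
  have hcast_ne : ∀ i : ℕ, ((i + m : ℕ) : ℂ) ≠ 0 := by
    intro i
    have : i + m ≠ 0 := by omega
    exact_mod_cast this
  have hb_mul : ∀ i : ℕ, b i * ((i + m : ℕ) : ℂ) = a i := fun i =>
    div_mul_cancel₀ _ (hcast_ne i)
  have hSum : Summable (fun i => ‖p i‖ * r1 ^ i) := by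
    have h1 : Summable (fun i => ‖p i‖ * (rn : ℝ) ^ i) :=
      p.summable_norm_mul_pow (lt_of_lt_of_le hrnrp hp.r_le)
    refine h1.of_nonneg_of_le (fun i => by positivity) (fun i => ?_)
    exact mul_le_mul_of_nonneg_left (pow_le_pow_left₀ hr1pos.le hr1rn i) (norm_nonneg _)
  have ha_le : ∀ i, ‖a i‖ ≤ ‖p i‖ := by
    intro i
    have h := (p i).le_opNorm (fun _ => (1 : ℂ))
    simp only [norm_one, Finset.prod_const_one, mul_one] at h
    exact h
  have F0 : ∀ u : ℂ, ‖u‖ < r1 → HasSum (fun i => a i * u ^ i) (q u) := by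
    intro u hu
    have hmem : u ∈ Metric.eball (0 : ℂ) rp := by
      rw [Metric.mem_eball, edist_zero_right]
      refine lt_of_le_of_lt ?_ hrnrp
      rw [enorm_eq_nnnorm, ENNReal.coe_le_coe]
      exact_mod_cast (hu.trans_le hr1rn).le
    have := hp.hasSum hmem
    simp only [zero_add] at this
    convert this using 2 with i
    · rfl
    rw [FormalMultilinearSeries.apply_eq_pow_smul_coeff, smul_eq_mul]
    ring
  -- ψ and φ
  set ψ : ℂ → ℂ := fun u => ∑' i, b i * u ^ (i + m) with hψdef
  set φ : ℂ → ℂ := fun u => ∑' i, b i * u ^ i with hφdef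
  have hψφ : ∀ u : ℂ, ψ u = u ^ m * φ u := by
    intro u
    rw [hψdef, hφdef]
    simp only
    rw [← tsum_mul_left]
    congr 1 with i
    rw [pow_add]
    ring
  have F1 : ∀ u : ℂ, ‖u‖ < r1 → HasDerivAt ψ (u ^ (m - 1) * q u) u := by
    intro u hu
    have key := hasDerivAt_tsum_of_isPreconnected (u := fun i => ‖p i‖ * r1 ^ i)
      (g := fun i y => b i * y ^ (i + m)) (g' := fun i y => a i * y ^ (i + m - 1))
      (t := Metric.ball (0:ℂ) r1) (y₀ := 0) (y := u) hSum isOpen_ball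
      (convex_ball _ _).isPreconnected ?hg ?hg' (mem_ball_self hr1pos) ?hg0
      (mem_ball_zero_iff.mpr hu)
    case hg =>
      intro i y _
      have h1 : HasDerivAt (fun y : ℂ => y ^ (i + m)) (((i+m : ℕ) : ℂ) * y ^ (i + m - 1)) y :=
        hasDerivAt_pow (i+m) y
      have h2 := h1.const_mul (b i)
      convert h2 using 1
      show a i * y ^ (i + m - 1) = b i * (((i+m : ℕ) : ℂ) * y ^ (i + m - 1))
      rw [← hb_mul i]
      ring
      rfl
    case hg' =>
      intro i y hy
      rw [mem_ball_zero_iff] at hy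
      rw [norm_mul, norm_pow]
      calc ‖a i‖ * ‖y‖ ^ (i + m - 1) ≤ ‖p i‖ * r1 ^ (i + m - 1) :=
            mul_le_mul (ha_le i) (pow_le_pow_left₀ (norm_nonneg _) hy.le _)
              (by positivity) (norm_nonneg _)
        _ ≤ ‖p i‖ * r1 ^ i := by
            refine mul_le_mul_of_nonneg_left ?_ (norm_nonneg _)
            exact pow_le_pow_of_le_one hr1pos.le hr1one (by omega)
    case hg0 =>
      have : ∀ i : ℕ, b i * (0:ℂ) ^ (i + m) = 0 := by
        intro i
        rw [zero_pow (by omega), mul_zero]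
      simpa [this] using summable_zero
    have hsum_eq : (∑' i, a i * u ^ (i + m - 1)) = u ^ (m - 1) * q u := by
      have h1 : ∀ i : ℕ, a i * u ^ (i + m - 1) = u ^ (m - 1) * (a i * u ^ i) := by
        intro i
        rw [show i + m - 1 = (m - 1) + i by omega, pow_add]
        ring
      rw [tsum_congr h1, tsum_mul_left, (F0 u hu).tsum_eq]
    rwa [hsum_eq] at key
  -- φ differentiability on ball r1/2
  have F2 : ∀ u : ℂ, ‖u‖ < r1 / 2 → DifferentiableAt ℂ φ u := by
    intro u hu
    have key := hasDerivAt_tsum_of_isPreconnected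
      (u := fun i => (2 / r1) * (‖p i‖ * r1 ^ i))
      (g := fun i y => b i * y ^ i) (g' := fun i y => b i * (i * y ^ (i - 1)))
      (t := Metric.ball (0:ℂ) (r1/2)) (y₀ := 0) (y := u) (hSum.mul_left _) isOpen_ball
      (convex_ball _ _).isPreconnected ?hg ?hg' (mem_ball_self (by linarith)) ?hg0
      (mem_ball_zero_iff.mpr hu)
    case hg =>
      intro i y _
      exact (hasDerivAt_pow i y).const_mul (b i)
    case hg' =>
      intro i y hy
      rw [mem_ball_zero_iff] at hy
      rcases Nat.eq_zero_or_pos i with rfl | hi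
      · simp only [Nat.cast_zero, zero_mul, mul_zero, norm_zero]
        positivity
      rw [norm_mul, norm_mul, norm_pow, Complex.norm_natCast]
      have hb_le : ‖b i‖ ≤ ‖p i‖ := by
        rw [hbdef]
        simp only
        rw [norm_div, Complex.norm_natCast]
        calc ‖a i‖ / ((i + m : ℕ) : ℝ) ≤ ‖a i‖ / 1 := by
              apply div_le_div_of_nonneg_left (norm_nonneg _) one_pos
              exact_mod_cast by omega
          _ = ‖a i‖ := div_one _
          _ ≤ ‖p i‖ := ha_le i
      have hy' : ‖y‖ ^ (i - 1) ≤ (r1 / 2) ^ (i - 1) :=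
        pow_le_pow_left₀ (norm_nonneg _) hy.le _
      have hhalf : (i : ℝ) * (r1 / 2) ^ (i - 1) ≤ (2 / r1) * r1 ^ i := by
        have h2i : (i : ℝ) ≤ 2 ^ i := by
          exact_mod_cast (Nat.lt_two_pow_self (n := i)).le
        calc (i:ℝ) * (r1/2)^(i-1) ≤ 2 ^ i * (r1/2)^(i-1) :=
              mul_le_mul_of_nonneg_right h2i (by positivity)
          _ = 2 * r1 ^ (i-1) := by
              obtain ⟨k, rfl⟩ : ∃ k, i = k + 1 := ⟨i-1, by omega⟩
              rw [Nat.add_sub_cancel, div_pow, pow_succ]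
              field_simp
          _ = (2/r1) * r1 ^ i := by
              obtain ⟨k, rfl⟩ : ∃ k, i = k + 1 := ⟨i-1, by omega⟩
              rw [Nat.add_sub_cancel, pow_succ]
              field_simp
      calc ‖b i‖ * ((i : ℝ) * ‖y‖ ^ (i-1)) ≤ ‖p i‖ * ((i:ℝ) * (r1/2) ^ (i-1)) := by
            apply mul_le_mul hb_le ?_ (by positivity) (norm_nonneg _)
            exact mul_le_mul_of_nonneg_left hy' (by positivity)
        _ ≤ ‖p i‖ * ((2/r1) * r1 ^ i) :=
            mul_le_mul_of_nonneg_left hhalf (norm_nonneg _)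
        _ = (2/r1) * (‖p i‖ * r1 ^ i) := by ring
    case hg0 =>
      apply summable_of_ne_finset_zero (s := {0})
      intro i hi
      simp only [Finset.mem_singleton] at hi
      show b i * (0:ℂ) ^ i = 0
      rw [zero_pow hi, mul_zero]
    exact key.differentiableAt
  -- φ at 0, root, rho
  have ha0 : a 0 = q 0 := by
    rw [hadef]
    exact hp.coeff_zero (fun _ => 1)
  have hφ0 : φ 0 = b 0 := by
    rw [hφdef]
    simp only
    rw [tsum_eq_single 0 (fun i hi => by rw [zero_pow hi, mul_zero])]
    simp
  have hb0 : b 0 ≠ 0 := by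
    rw [hbdef]
    exact div_ne_zero (ha0 ▸ hq0) (hcast_ne 0)
  set B0 : ℂ := b 0 with hB0def
  have hφcont : ContinuousAt φ 0 := (F2 0 (by rw [norm_zero]; positivity)).continuousAt
  have hev : ∀ᶠ v in nhds (0:ℂ), ‖φ v - B0‖ < ‖B0‖ / 2 := by
    have := hφcont.tendsto
    rw [hφ0] at this
    have h2 := Metric.tendsto_nhds.mp this (‖B0‖/2) (half_pos (norm_pos_iff.mpr hb0))
    simpa [dist_eq_norm] using h2
  obtain ⟨r3', hr3'pos, hr3'⟩ := Metric.eventually_nhds_iff.mp hev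
  set r3 : ℝ := min r3' (min (r1/2) δ) with hr3def
  have hr3pos : 0 < r3 := lt_min hr3'pos (lt_min (by positivity) hδ)
  have hr3r1 : r3 ≤ r1 / 2 := (min_le_right _ _).trans (min_le_left _ _)
  have hr3δ : r3 ≤ δ := (min_le_right _ _).trans (min_le_right _ _)
  have hφnear : ∀ v : ℂ, ‖v‖ < r3 → ‖φ v - B0‖ < ‖B0‖ / 2 := by
    intro v hv
    exact hr3' (by simpa using hv.trans_le (min_le_left _ _))
  have hφne : ∀ v : ℂ, ‖v‖ < r3 → φ v ≠ 0 := by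
    intro v hv h0
    have := hφnear v hv
    rw [h0, zero_sub, norm_neg] at this
    linarith [norm_nonneg B0]
  have hslit : ∀ v : ℂ, ‖v‖ < r3 → φ v / B0 ∈ Complex.slitPlane := by
    intro v hv
    have h1 : ‖φ v / B0 - 1‖ < 1/2 := by
      rw [show φ v / B0 - 1 = (φ v - B0) / B0 by field_simp]
      rw [norm_div]
      rw [div_lt_iff₀ (norm_pos_iff.mpr hb0)]
      calc ‖φ v - B0‖ < ‖B0‖/2 := hφnear v hv
        _ = 1/2 * ‖B0‖ := by ring
    refine Complex.mem_slitPlane_iff.mpr (Or.inl ?_)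
    have h2 : |((φ v / B0) - 1).re| ≤ ‖φ v / B0 - 1‖ := Complex.abs_re_le_norm _
    have h3 : ((φ v / B0) - 1).re = (φ v / B0).re - 1 := by simp
    rw [h3] at h2
    have := abs_le.mp h2
    linarith [this.1]
  -- analytic m-th root
  set rt : ℂ := Complex.exp (Complex.log B0 / m) with hrtdef
  have hrtne : rt ≠ 0 := Complex.exp_ne_zero _
  set lam : ℂ → ℂ := fun v => rt * Complex.exp (Complex.log (φ v / B0) / m) with hlamdef
  have hmne : ((m : ℕ) : ℂ) ≠ 0 := Nat.cast_ne_zero.mpr (by omega)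
  have hlam_pow : ∀ v : ℂ, ‖v‖ < r3 → lam v ^ m = φ v := by
    intro v hv
    rw [hlamdef]
    simp only
    rw [mul_pow, ← Complex.exp_nat_mul, ← Complex.exp_nat_mul,
      mul_div_cancel₀ _ hmne, mul_div_cancel₀ _ hmne,
      Complex.exp_log hb0, Complex.exp_log (div_ne_zero (hφne v hv) hb0)]
    field_simp
  have hφan : ∀ v : ℂ, ‖v‖ < r1/2 → AnalyticAt ℂ φ v := by
    intro v hv
    exact (DifferentiableOn.analyticAt (fun w hw => (F2 w (mem_ball_zero_iff.mp hw)).differentiableWithinAt)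
      (Metric.isOpen_ball.mem_nhds (mem_ball_zero_iff.mpr hv)))
  have hlam_an : ∀ v : ℂ, ‖v‖ < r3 → AnalyticAt ℂ lam v := by
    intro v hv
    apply analyticAt_const.mul
    apply AnalyticAt.cexp
    apply AnalyticAt.div ?_ analyticAt_const hmne
    exact AnalyticAt.clog (((hφan v (hv.trans_le hr3r1)).div analyticAt_const hb0)) (hslit v hv)
  have hlam0 : lam 0 = rt := by
    rw [hlamdef]
    simp only
    rw [hφ0, div_self hb0, Complex.log_one, zero_div, Complex.exp_zero, mul_one]
  set rho : ℂ → ℂ := fun v => v * lam v with hrhodef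
  have hrho_an : ∀ v : ℂ, ‖v‖ < r3 → AnalyticAt ℂ rho v := by
    intro v hv
    exact (analyticAt_id).mul (hlam_an v hv)
  have hrho0 : rho 0 = 0 := zero_mul _
  have hrho_pow : ∀ v : ℂ, ‖v‖ < r3 → rho v ^ m = ψ v := by
    intro v hv
    rw [hrhodef]
    simp only
    rw [mul_pow, hlam_pow v hv, ← hψφ]
  -- derivative of rho near 0
  have hrho_onhd : AnalyticOnNhd ℂ rho (Metric.ball 0 r3) := fun v hv =>
    hrho_an v (mem_ball_zero_iff.mp hv)
  have hderiv_an : AnalyticOnNhd ℂ (deriv rho) (Metric.ball 0 r3) := hrho_onhd.deriv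
  have hrho_deriv0 : HasDerivAt rho rt 0 := by
    have hld : HasDerivAt lam (deriv lam 0) 0 :=
      ((hlam_an 0 (by rw [norm_zero]; exact hr3pos)).differentiableAt).hasDerivAt
    have h1 := (hasDerivAt_id (0:ℂ)).mul hld
    simp only [one_mul, zero_mul, mul_zero, add_zero, hlam0] at h1
    convert h1 using 1
    rfl
    rfl
    rfl
    simp
  have hderiv_rho0 : deriv rho 0 = rt := hrho_deriv0.deriv
  have hderiv_cont : ContinuousAt (deriv rho) 0 :=
    (hderiv_an 0 (mem_ball_zero_iff.mpr (by rw [norm_zero]; exact hr3pos))).continuousAt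
  have hderiv_ne_ev : ∀ᶠ v in nhds (0:ℂ), deriv rho v ≠ 0 := by
    have := hderiv_cont.eventually_ne (by rw [hderiv_rho0]; exact hrtne)
    exact this
  obtain ⟨r4', hr4'pos, hr4'⟩ := Metric.eventually_nhds_iff.mp hderiv_ne_ev
  set r4 : ℝ := min r4' r3 with hr4def
  have hr4pos : 0 < r4 := lt_min hr4'pos hr3pos
  have hr4r3 : r4 ≤ r3 := min_le_right _ _
  have hderiv_ne : ∀ v : ℂ, ‖v‖ < r4 → deriv rho v ≠ 0 := by
    intro v hv
    exact hr4' (by simpa using hv.trans_le (min_le_left _ _))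
  -- inverse function theorem
  have hstrict : HasStrictDerivAt rho rt 0 := by
    have hcd : ContDiffAt ℂ 1 rho 0 :=
      (hrho_an 0 (by rw [norm_zero]; exact hr3pos)).contDiffAt
    have := hcd.hasStrictDerivAt one_ne_zero
    rwa [hderiv_rho0] at this
  set e := (hstrict.hasStrictFDerivAt_equiv hrtne).toOpenPartialHomeomorph rho with hedef
  have hecoe : (e : ℂ → ℂ) = rho := HasStrictFDerivAt.toOpenPartialHomeomorph_coe _
  have hsource0 : (0:ℂ) ∈ e.source := HasStrictFDerivAt.mem_toOpenPartialHomeomorph_source _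
  have htarget0 : (0:ℂ) ∈ e.target := by
    have h := HasStrictFDerivAt.image_mem_toOpenPartialHomeomorph_target
      (hstrict.hasStrictFDerivAt_equiv hrtne)
    rwa [hrho0] at h
  have htopen : IsOpen e.target := e.open_target
  set σ : ℂ → ℂ := ⇑e.symm with hσdef
  have hσ0 : σ 0 = 0 := by
    have h := e.left_inv hsource0
    have h2 : (e : ℂ → ℂ) 0 = 0 := by rw [hecoe, hrho0]
    rw [h2] at h
    exact h
  have hright : ∀ w : ℂ, w ∈ e.target → rho (σ w) = w := by
    intro w hw
    have h := e.right_inv hw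
    rwa [← hecoe]
  have hinj : Set.InjOn σ e.target := e.symm.injOn
  have hσcont0 : ContinuousAt σ 0 := e.continuousAt_symm htarget0
  have hTmem : e.target ∩ σ ⁻¹' (Metric.ball 0 r4) ∈ nhds (0:ℂ) := by
    refine Filter.inter_mem (htopen.mem_nhds htarget0) ?_
    apply hσcont0.preimage_mem_nhds
    rw [hσ0]
    exact Metric.ball_mem_nhds _ hr4pos
  obtain ⟨ε, hεpos, hεsub⟩ := Metric.mem_nhds_iff.mp hTmem
  -- roots of unity and radial function
  set εm : ℝ := min ε 1 with hεmdef
  have hεmpos : 0 < εm := lt_min hεpos one_pos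
  have hεmε : εm ≤ ε := min_le_left _ _
  set α : ℝ := -(εm ^ m) with hαdef
  have hαneg : α < 0 := neg_lt_zero.mpr (pow_pos hεmpos m)
  set θ : Fin m → ℝ := fun j => 2 * Real.pi * (j : ℕ) / m with hθdef
  set ω : Fin m → ℂ := fun j => Complex.exp ((θ j : ℝ) * Complex.I) with hωdef
  have hωnorm : ∀ j, ‖ω j‖ = 1 := fun j => Complex.norm_exp_ofReal_mul_I _
  have hωne : ∀ j, ω j ≠ 0 := fun j => Complex.exp_ne_zero _
  have hωpow : ∀ j, ω j ^ m = 1 := by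
    intro j
    rw [hωdef]
    simp only
    rw [← Complex.exp_nat_mul]
    have hc : (m:ℂ) * (((θ j : ℝ) : ℂ) * Complex.I) = ((j:ℕ):ℂ) * (2 * (Real.pi:ℂ) * Complex.I) := by
      rw [hθdef]
      push_cast
      field_simp
    rw [hc, Complex.exp_nat_mul_two_pi_mul_I]
  set rad : ℝ → ℝ := fun t => (-t) ^ ((1:ℝ)/(m:ℝ)) with hraddef
  have hmRne : ((m:ℕ):ℝ) ≠ 0 := Nat.cast_ne_zero.mpr (by omega)
  have hrad_pos : ∀ t ∈ Set.Ioo α (0:ℝ), 0 < rad t := by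
    intro t ht
    exact Real.rpow_pos_of_pos (by linarith [ht.2]) _
  have hrad_lt : ∀ t ∈ Set.Ioo α (0:ℝ), rad t < εm := by
    intro t ht
    have ht1 : (0:ℝ) < -t := by linarith [ht.2]
    have ht2 : -t < εm ^ m := by
      have := ht.1
      rw [hαdef] at this
      linarith
    have h := Real.rpow_lt_rpow ht1.le ht2 (by positivity : (0:ℝ) < 1/(m:ℝ))
    rwa [← Real.rpow_natCast εm m, ← Real.rpow_mul hεmpos.le,
      mul_one_div_cancel hmRne, Real.rpow_one] at h
  have hradm : ∀ t ∈ Set.Ioo α (0:ℝ), (rad t) ^ m = -t := by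
    intro t ht
    have ht1 : (0:ℝ) < -t := by linarith [ht.2]
    rw [hraddef]
    simp only
    rw [← Real.rpow_natCast ((-t) ^ ((1:ℝ)/(m:ℝ))) m, ← Real.rpow_mul ht1.le,
      one_div_mul_cancel hmRne, Real.rpow_one]
  -- the trajectories in u-coordinates
  set uu : Fin m → ℝ → ℂ := fun j t => σ (ω j * ((rad t : ℝ) : ℂ)) with huudef
  have hw_norm : ∀ (j : Fin m), ∀ t ∈ Set.Ioo α (0:ℝ), ‖ω j * ((rad t : ℝ) : ℂ)‖ = rad t := by
    intro j t ht
    rw [norm_mul, hωnorm, one_mul, Complex.norm_real, Real.norm_eq_abs,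
      abs_of_pos (hrad_pos t ht)]
  have hw_mem : ∀ (j : Fin m), ∀ t ∈ Set.Ioo α (0:ℝ),
      (ω j * ((rad t : ℝ) : ℂ)) ∈ e.target ∧ σ (ω j * ((rad t : ℝ) : ℂ)) ∈ Metric.ball 0 r4 := by
    intro j t ht
    have hmem : (ω j * ((rad t : ℝ) : ℂ)) ∈ Metric.ball (0:ℂ) ε := by
      rw [mem_ball_zero_iff, hw_norm j t ht]
      exact lt_of_lt_of_le (hrad_lt t ht) hεmε
    exact hεsub hmem
  have hw_ne : ∀ (j : Fin m), ∀ t ∈ Set.Ioo α (0:ℝ), (ω j * ((rad t : ℝ) : ℂ)) ≠ 0 := by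
    intro j t ht
    rw [← norm_pos_iff, hw_norm j t ht]
    exact hrad_pos t ht
  have huu_norm : ∀ (j : Fin m), ∀ t ∈ Set.Ioo α (0:ℝ), ‖uu j t‖ < r4 := by
    intro j t ht
    exact mem_ball_zero_iff.mp (hw_mem j t ht).2
  have hrho_uu : ∀ (j : Fin m), ∀ t ∈ Set.Ioo α (0:ℝ),
      rho (uu j t) = ω j * ((rad t : ℝ) : ℂ) := by
    intro j t ht
    exact hright _ (hw_mem j t ht).1
  have huu_ne : ∀ (j : Fin m), ∀ t ∈ Set.Ioo α (0:ℝ), uu j t ≠ 0 := by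
    intro j t ht h0
    apply hw_ne j t ht
    rw [← hrho_uu j t ht, h0, hrho0]
  have hw_pow : ∀ (j : Fin m), ∀ t ∈ Set.Ioo α (0:ℝ),
      (ω j * ((rad t : ℝ) : ℂ)) ^ m = -(t:ℂ) := by
    intro j t ht
    rw [mul_pow, hωpow, one_mul, ← Complex.ofReal_pow, hradm t ht, Complex.ofReal_neg]
  have hψuu : ∀ (j : Fin m), ∀ t ∈ Set.Ioo α (0:ℝ), ψ (uu j t) = -(t:ℂ) := by
    intro j t ht
    rw [← hrho_pow _ ((huu_norm j t ht).trans_le hr4r3), hrho_uu j t ht, hw_pow j t ht]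
  -- derivative facts
  have huu_r1 : ∀ (j : Fin m), ∀ t ∈ Set.Ioo α (0:ℝ), ‖uu j t‖ < r1 := by
    intro j t ht
    calc ‖uu j t‖ < r4 := huu_norm j t ht
      _ ≤ r3 := hr4r3
      _ ≤ r1/2 := hr3r1
      _ < r1 := by linarith
  have hDrel : ∀ (j : Fin m), ∀ t ∈ Set.Ioo α (0:ℝ), ∃ D : ℂ,
      HasDerivAt (uu j) D t ∧ D * ((uu j t) ^ (m - 1) * q (uu j t)) = -1 := by
    intro j t ht
    have ht1 : (0:ℝ) < -t := by linarith [ht.2]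
    have h1 : HasDerivAt (fun x : ℝ => x ^ ((1:ℝ)/(m:ℝ))) 
        (((1:ℝ)/(m:ℝ)) * (-t) ^ ((1:ℝ)/(m:ℝ) - 1)) (-t) :=
      Real.hasDerivAt_rpow_const (Or.inl (ne_of_gt ht1))
    have h2 : HasDerivAt (fun s : ℝ => -s) (-1) t := (hasDerivAt_id t).neg
    have hrad_der : HasDerivAt rad ((((1:ℝ)/(m:ℝ)) * (-t) ^ ((1:ℝ)/(m:ℝ) - 1)) * (-1)) t := by
      have h3 := h1.comp t h2
      simpa [Function.comp_def, hraddef] using h3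
    set dr : ℝ := (((1:ℝ)/(m:ℝ)) * (-t) ^ ((1:ℝ)/(m:ℝ) - 1)) * (-1) with hdrdef
    have hw_der : HasDerivAt (fun s : ℝ => ω j * ((rad s : ℝ) : ℂ)) (ω j * (dr:ℂ)) t :=
      (hrad_der.ofReal_comp).const_mul (ω j)
    have hσ_der : HasDerivAt σ ((deriv rho (uu j t))⁻¹) (ω j * ((rad t : ℝ) : ℂ)) := by
      apply HasDerivAt.of_local_left_inverse (e.continuousAt_symm (hw_mem j t ht).1)
      · exact ((hrho_an (uu j t) ((huu_norm j t ht).trans_le hr4r3)).differentiableAt).hasDerivAt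
      · exact hderiv_ne _ (huu_norm j t ht)
      · filter_upwards [htopen.mem_nhds (hw_mem j t ht).1] with y hy using hright y hy
    have huu_der : HasDerivAt (uu j) ((ω j * (dr:ℂ)) • (deriv rho (uu j t))⁻¹) t := by
      have h4 := hσ_der.scomp t hw_der
      simpa [Function.comp_def, huudef] using h4
    refine ⟨_, huu_der, ?_⟩
    have hcomp := (F1 (uu j t) (huu_r1 j t ht)).scomp t huu_der
    have heq : (fun s : ℝ => -((s:ℂ))) =ᶠ[nhds t] (fun s => ψ (uu j s)) := by
      filter_upwards [Ioo_mem_nhds ht.1 ht.2] with s hs using (hψuu j s hs).symm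
    have h5 : HasDerivAt (fun s : ℝ => -((s:ℂ)))
        (((ω j * (dr:ℂ)) • (deriv rho (uu j t))⁻¹) • ((uu j t) ^ (m - 1) * q (uu j t))) t :=
      HasDerivAt.congr_of_eventuallyEq hcomp heq
    have hlin : HasDerivAt (fun s : ℝ => -((s:ℂ))) (-1) t := by
      have := (hasDerivAt_id t).ofReal_comp (z := t)
      simpa [Pi.neg_def] using this.neg
    have h6 := h5.unique hlin
    rw [smul_eq_mul] at h6
    exact h6
  -- tendsto
  have hrad_tendsto : Filter.Tendsto rad (nhdsWithin 0 (Set.Iio (0:ℝ))) (nhds 0) := by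
    have hneg : Filter.Tendsto (fun t : ℝ => -t) (nhdsWithin 0 (Set.Iio (0:ℝ))) (nhds 0) := by
      have h : Filter.Tendsto (fun t : ℝ => -t) (nhds 0) (nhds 0) := by
        simpa using (continuous_neg.tendsto (0:ℝ))
      exact h.mono_left nhdsWithin_le_nhds
    have hcn : ContinuousAt (fun x : ℝ => x ^ ((1:ℝ)/(m:ℝ))) 0 :=
      Real.continuousAt_rpow_const 0 _ (Or.inr (by positivity))
    have h := hcn.tendsto.comp hneg
    rw [Real.zero_rpow (by positivity : (0:ℝ) < 1/(m:ℝ)).ne'] at h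
    exact h
  have huu_tendsto : ∀ j : Fin m, Filter.Tendsto (uu j) (nhdsWithin 0 (Set.Iio (0:ℝ))) (nhds 0) := by
    intro j
    have hw : Filter.Tendsto (fun t : ℝ => ω j * ((rad t : ℝ) : ℂ))
        (nhdsWithin 0 (Set.Iio (0:ℝ))) (nhds 0) := by
      have h1 := (Complex.continuous_ofReal.tendsto 0).comp hrad_tendsto
      have h2 := h1.const_mul (ω j)
      simpa using h2
    have h := hσcont0.tendsto.comp hw
    rwa [hσ0] at h
  -- injectivity
  have hinj2 : ∀ j k : Fin m, j ≠ k → ∀ s ∈ Set.Ioo α (0:ℝ), ∀ t ∈ Set.Ioo α (0:ℝ),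
      uu j s ≠ uu k t := by
    intro j k hjk s hs t ht heq
    have h1 : -((s:ℝ):ℂ) = -((t:ℝ):ℂ) := by rw [← hψuu j s hs, ← hψuu k t ht, heq]
    have hst : s = t := by
      have := neg_inj.mp h1
      exact_mod_cast this
    subst hst
    have h2 : ω j * ((rad s:ℝ):ℂ) = ω k * ((rad s:ℝ):ℂ) :=
      hinj (hw_mem j s hs).1 (hw_mem k s hs).1 heq
    have hradne : ((rad s:ℝ):ℂ) ≠ 0 := by
      exact_mod_cast (hrad_pos s hs).ne'
    have h3 : ω j = ω k := mul_right_cancel₀ hradne h2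
    rw [hωdef] at h3
    simp only at h3
    obtain ⟨N, hN⟩ := Complex.exp_eq_exp_iff_exists_int.mp h3
    have h4 : ((θ j : ℝ) : ℂ) = ((θ k + N * (2 * Real.pi) : ℝ) : ℂ) := by
      have h4' : ((θ j :ℝ):ℂ) * Complex.I = ((θ k + N * (2*Real.pi) : ℝ):ℂ) * Complex.I := by
        rw [hN]
        push_cast
        ring
      exact mul_right_cancel₀ Complex.I_ne_zero h4'
    have h5 : θ j = θ k + N * (2*Real.pi) := Complex.ofReal_inj.mp h4
    rw [hθdef] at h5
    simp only at h5
    have h2π : (2 * Real.pi) ≠ 0 := by positivity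
    have h6 : ((j:ℕ):ℝ) = ((k:ℕ):ℝ) + N * m := by
      have h5' : (2 * Real.pi) * (((j:ℕ):ℝ)/m) = (2 * Real.pi) * (((k:ℕ):ℝ)/m + N) := by
        rw [mul_add]
        rw [show (2 * Real.pi) * (((j:ℕ):ℝ)/m) = 2 * Real.pi * ((j:ℕ):ℝ) / m by ring,
          show (2 * Real.pi) * (((k:ℕ):ℝ)/m) = 2 * Real.pi * ((k:ℕ):ℝ) / m by ring]
        rw [h5]
        ring
      have h5'' := mul_left_cancel₀ h2π h5'
      field_simp at h5''
      linarith [h5'']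
    have h7 : ((j:ℕ):ℤ) = ((k:ℕ):ℤ) + N * m := by exact_mod_cast h6
    have hj := j.isLt
    have hk := k.isLt
    have hmZ : (0:ℤ) < (m:ℤ) := by exact_mod_cast (by omega : 0 < m)
    have hN0 : N = 0 := by
      rcases lt_trichotomy N 0 with h | h | h
      · have : N * (m:ℤ) ≤ -1 * m := mul_le_mul_of_nonneg_right (by omega) hmZ.le
        have hjZ : (0:ℤ) ≤ ((j:ℕ):ℤ) := by positivity
        have hkZ : ((k:ℕ):ℤ) < m := by exact_mod_cast hk
        omega
      · exact h
      · have : 1 * (m:ℤ) ≤ N * m := mul_le_mul_of_nonneg_right (by omega) hmZ.le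
        have hjZ : ((j:ℕ):ℤ) < m := by exact_mod_cast hj
        have hkZ : (0:ℤ) ≤ ((k:ℕ):ℤ) := by positivity
        omega
    apply hjk
    apply Fin.ext
    have : ((j:ℕ):ℤ) = ((k:ℕ):ℤ) := by rw [h7, hN0]; ring
    exact_mod_cast this
  refine ⟨uu, α, hαneg, ?_, huu_tendsto, hinj2⟩
  intro j t ht
  refine ⟨huu_ne j t ht, ?_, hDrel j t ht⟩
  calc ‖uu j t‖ < r4 := huu_norm j t ht
    _ ≤ r3 := hr4r3
    _ ≤ δ := hr3δ

/-- If `f` is holomorphic on an annulus `R < |z| < ∞` with a pole of order `n ≥ 2` at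
infinity (`f(z) ~ c zⁿ` as `z → ∞`, `c ≠ 0`), then `ż = f(z)` has at least `n - 1`
pairwise disjoint trajectories tending to infinity in finite increasing time. -/
theorem stmt5 (f : ℂ → ℂ) (R : ℝ) (n : ℕ) (hn : 2 ≤ n) (c : ℂ) (hc : c ≠ 0)
    (hf : ∀ w : ℂ, R < ‖w‖ → AnalyticAt ℂ f w)
    (hasym : Filter.Tendsto (fun w : ℂ => f w / w ^ n)
      (Filter.comap norm Filter.atTop) (nhds c)) :
    ∃ (γ : Fin (n - 1) → ℝ → ℂ) (α β : Fin (n - 1) → ℝ),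
      (∀ j, α j < β j ∧
        (∀ t ∈ Set.Ioo (α j) (β j), R < ‖γ j t‖ ∧ HasDerivAt (γ j) (f (γ j t)) t) ∧
        Filter.Tendsto (fun t => ‖γ j t‖) (nhdsWithin (β j) (Set.Iio (β j)))
          Filter.atTop) ∧
      (∀ j k, j ≠ k → ∀ s ∈ Set.Ioo (α j) (β j), ∀ t ∈ Set.Ioo (α k) (β k),
        γ j s ≠ γ k t) := by
  set m := n - 1 with hmdef
  have hm1 : 1 ≤ m := by omega
  have hnm : n = m + 1 := by omega
  have hcnorm : 0 < ‖c‖ := norm_pos_iff.mpr hc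
  have hev := Metric.tendsto_nhds.mp hasym (‖c‖/2) (by positivity)
  rw [Filter.eventually_comap] at hev
  obtain ⟨M, hM⟩ := Filter.eventually_atTop.mp hev
  set R1 : ℝ := max M (max R 1) + 1 with hR1def
  have hR1M : M ≤ R1 := by
    have := le_max_left M (max R 1)
    linarith
  have hR1R : R < R1 := by
    have := (le_max_left R 1).trans (le_max_right M (max R 1))
    linarith
  have hR1one : 1 < R1 := by
    have := (le_max_right R 1).trans (le_max_right M (max R 1))
    linarith
  have hR1pos : 0 < R1 := by linarith
  have hA : ∀ w : ℂ, R1 ≤ ‖w‖ → ‖f w / w ^ n - c‖ < ‖c‖/2 := by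
    intro w hw
    have := hM ‖w‖ (le_trans hR1M hw) w rfl
    rwa [dist_eq_norm] at this
  have hfne : ∀ w : ℂ, R1 ≤ ‖w‖ → f w ≠ 0 := by
    intro w hw h0
    have := hA w hw
    rw [h0, zero_div, zero_sub, norm_neg] at this
    linarith
  set rk : ℝ := (2*R1)⁻¹ with hrkdef
  have hrkpos : 0 < rk := by positivity
  have hinv_norm : ∀ u : ℂ, u ≠ 0 → ‖u‖ < rk → R1 ≤ ‖u⁻¹‖ ∧ R < ‖u⁻¹‖ := by
    intro u hu hlt
    have h1 : 0 < ‖u‖ := norm_pos_iff.mpr hu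
    have h2 : (2*R1) < ‖u‖⁻¹ := by
      rw [hrkdef] at hlt
      have := (inv_lt_inv₀ (by positivity) h1).mpr hlt
      rwa [inv_inv] at this
    rw [norm_inv]
    constructor <;> linarith
  set q : ℂ → ℂ := fun u => if u = 0 then c⁻¹ else (u^n * f u⁻¹)⁻¹ with hqdef
  have hq0 : q 0 = c⁻¹ := if_pos rfl
  have hq0ne : q 0 ≠ 0 := by rw [hq0]; exact inv_ne_zero hc
  have hqval : ∀ u : ℂ, u ≠ 0 → q u = (u^n * f u⁻¹)⁻¹ := fun u hu => if_neg hu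
  have hqdiff : ∀ᶠ z in nhdsWithin (0:ℂ) {(0:ℂ)}ᶜ, DifferentiableAt ℂ q z := by
    have hball : ∀ᶠ z in nhds (0:ℂ), ‖z‖ < rk := by
      filter_upwards [Metric.ball_mem_nhds (0:ℂ) hrkpos] with z hz
      exact mem_ball_zero_iff.mp hz
    filter_upwards [eventually_nhdsWithin_of_eventually_nhds hball,
      self_mem_nhdsWithin] with z hz hzne
    have hz2 := hinv_norm z hzne hz
    have hform : ∀ᶠ v in nhds z, (fun v : ℂ => (v^n * f v⁻¹)⁻¹) v = q v := by
      filter_upwards [isOpen_compl_singleton.eventually_mem hzne] with v hv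
      exact (if_neg hv).symm
    have hdiff : DifferentiableAt ℂ (fun v : ℂ => (v^n * f v⁻¹)⁻¹) z := by
      apply DifferentiableAt.inv
      · exact (differentiableAt_pow n).mul
          (((hf z⁻¹ hz2.2).differentiableAt).comp z (differentiableAt_inv hzne))
      · exact mul_ne_zero (pow_ne_zero n hzne) (hfne z⁻¹ hz2.1)
    exact hdiff.congr_of_eventuallyEq (hform.mono fun v hv => hv.symm)
  have hinvT : Filter.Tendsto (fun u : ℂ => u⁻¹) (nhdsWithin (0:ℂ) {(0:ℂ)}ᶜ)
      (Filter.comap norm Filter.atTop) := by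
    rw [Filter.tendsto_comap_iff]
    have h1 : Filter.Tendsto (fun u : ℂ => ‖u‖) (nhdsWithin (0:ℂ) {(0:ℂ)}ᶜ)
        (nhdsWithin 0 (Set.Ioi (0:ℝ))) := by
      apply tendsto_nhdsWithin_of_tendsto_nhds_of_eventually_within
      · have h : Filter.Tendsto (fun u : ℂ => ‖u‖) (nhds 0) (nhds 0) := by
          simpa using (continuous_norm.tendsto (0:ℂ))
        exact h.mono_left nhdsWithin_le_nhds
      · filter_upwards [self_mem_nhdsWithin] with u hu
        exact norm_pos_iff.mpr hu
    have h2 := tendsto_inv_nhdsGT_zero.comp h1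
    apply h2.congr
    intro u
    simp [Function.comp, norm_inv]
  have hlim : Filter.Tendsto q (nhdsWithin (0:ℂ) {(0:ℂ)}ᶜ) (nhds c⁻¹) := by
    have h2 := (hasym.comp hinvT).inv₀ hc
    apply h2.congr'
    filter_upwards [self_mem_nhdsWithin] with u hu
    rw [hqval u hu]
    simp only [Function.comp]
    congr 1
    rw [div_eq_mul_inv, inv_pow, inv_inv]
    ring
  have hqcont : ContinuousAt q 0 := by
    unfold ContinuousAt
    rw [hq0, ← nhdsNE_sup_pure]
    rw [Filter.tendsto_sup]
    refine ⟨hlim, ?_⟩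
    have := tendsto_pure_nhds q 0
    rwa [hq0] at this
  have hqan : AnalyticAt ℂ q 0 :=
    Complex.analyticAt_of_differentiable_on_punctured_nhds_of_continuousAt hqdiff hqcont
  obtain ⟨u, α, hαneg, hmain, htend, hdisj⟩ := stmt5_core q m hm1 hq0ne hqan rk hrkpos
  refine ⟨fun j t => (u j t)⁻¹, fun _ => α, fun _ => 0, ?_, ?_⟩
  · intro j
    refine ⟨hαneg, ?_, ?_⟩
    · intro t ht
      obtain ⟨hne, hlt, D, hD, hrel⟩ := hmain j t ht
      have hUinv := hinv_norm _ hne hlt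
      refine ⟨by simpa using hUinv.2, ?_⟩
      have hstep : HasDerivAt (fun s => (u j s)⁻¹) (D • (-((u j t)^2)⁻¹)) t := by
        have h4 := (hasDerivAt_inv hne).scomp t hD
        simpa [Function.comp_def] using h4
      have hfneU : f (u j t)⁻¹ ≠ 0 := hfne _ hUinv.1
      have hval : D • (-((u j t)^2)⁻¹) = f ((u j t)⁻¹) := by
        rw [smul_eq_mul]
        have hpow : (u j t)^n = (u j t)^(m-1) * (u j t)^2 := by
          rw [← pow_add]
          congr 1
          omega
        rw [hqval _ hne, hpow] at hrel
        have hU2 : (u j t)^2 ≠ 0 := pow_ne_zero _ hne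
        have hUm : (u j t)^(m-1) ≠ 0 := pow_ne_zero _ hne
        field_simp at hrel ⊢
        rw [one_div] at hrel
        rw [div_eq_iff hfneU] at hrel
        rw [one_div]
        linear_combination -hrel
      rwa [hval] at hstep
    · have h1 : Filter.Tendsto (fun t => ‖u j t‖) (nhdsWithin 0 (Set.Iio (0:ℝ)))
          (nhdsWithin 0 (Set.Ioi (0:ℝ))) := by
        apply tendsto_nhdsWithin_of_tendsto_nhds_of_eventually_within
        · have h := (continuous_norm.tendsto (0:ℂ)).comp (htend j)
          simpa [Function.comp_def] using h
        · filter_upwards [Ioo_mem_nhdsLT_of_mem (by constructor <;> [exact hαneg; exact le_refl 0] : (0:ℝ) ∈ Set.Ioc α 0)] with s hs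
          exact norm_pos_iff.mpr (hmain j s hs).1
      have h2 := tendsto_inv_nhdsGT_zero.comp h1
      apply h2.congr
      intro s
      simp [Function.comp, norm_inv]
  · intro j k hjk s hs t ht heq
    exact hdisj j k hjk s hs t ht (inv_injective heq)
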